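/- For any k ≥ 4 and d ≥ k+1, there exists a group G and a symmetric generating set S of G (i.e., S = S^{−1}, not containing the identity) with |S| ≤ d, such that |G| = (k−1)(⌊(d−k)/2⌋+2)^{k−1} and the Cayley graph Cay(G,S) has diameter at most k. -/

import Mathlib

namespace CayleyFirst

variable (n m : ℕ)

/-- cyclic shift of a vector indexed by `ZMod n`. -/
def shift (a : ZMod n) (f : ZMod n → ZMod m) : ZMod n → ZMod m := fun i => f (i - a)

/-- The semidirect product `(ZMod m)^(ZMod n) ⋊ ZMod n` (shift action). -/
def Sd := (ZMod n → ZMod m) × ZMod n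

namespace Sd

instance : Mul (Sd n m) := ⟨fun p q => (p.1 + shift n m p.2 q.1, p.2 + q.2)⟩
instance : One (Sd n m) := ⟨((0 : ZMod n → ZMod m), 0)⟩
instance : Inv (Sd n m) := ⟨fun p => (-(shift n m (-p.2) p.1), -p.2)⟩

lemma shift_shift (a b : ZMod n) (f : ZMod n → ZMod m) :
    shift n m a (shift n m b f) = shift n m (a + b) f := by
  funext i; simp [shift, sub_sub]

lemma mul_def (p q : Sd n m) : p * q = (p.1 + shift n m p.2 q.1, p.2 + q.2) := rfl

instance : Group (Sd n m) := by
  refine Group.ofLeftAxioms ?_ ?_ ?_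
  · intro a b c
    show ((a.1 + shift n m a.2 b.1) + shift n m (a.2 + b.2) c.1, (a.2 + b.2) + c.2)
        = (a.1 + (shift n m a.2 (b.1 + shift n m b.2 c.1)), a.2 + (b.2 + c.2))
    have h : shift n m a.2 (b.1 + shift n m b.2 c.1)
        = shift n m a.2 b.1 + shift n m (a.2 + b.2) c.1 := by
      funext i
      simp [shift, sub_sub]
    rw [h, Prod.mk.injEq]
    exact ⟨add_assoc _ _ _, add_assoc _ _ _⟩
  · intro a
    show ((0 : ZMod n → ZMod m) + shift n m 0 a.1, 0 + a.2) = a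
    have h : shift n m 0 a.1 = a.1 := by funext i; simp [shift]
    rw [h, zero_add, zero_add]
    rfl
  · intro a
    show (-(shift n m (-a.2) a.1) + shift n m (-a.2) a.1, -a.2 + a.2) = (0, 0)
    rw [Prod.mk.injEq]
    exact ⟨neg_add_cancel _, neg_add_cancel _⟩

lemma one_def : (1 : Sd n m) = ((0 : ZMod n → ZMod m), 0) := rfl

/-- indicator vector -/
def single (a : ZMod n) (c : ZMod m) : ZMod n → ZMod m := fun j => if j = a then c else 0

/-- generator `s_x = (x·δ₀, 1)` -/
def sgen (x : ZMod m) : Sd n m := (single n m 0 x, 1)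

/-- pure rotation -/
def rot (j : ZMod n) : Sd n m := (0, j)

lemma shift_single (a b : ZMod n) (c : ZMod m) :
    shift n m a (single n m b c) = single n m (b + a) c := by
  funext i
  simp only [shift, single, sub_eq_iff_eq_add]

lemma rot_mul_rot (i j : ZMod n) : rot n m i * rot n m j = rot n m (i + j) := by
  show ((0 : ZMod n → ZMod m) + shift n m i 0, i + j) = (0, i + j)
  have : shift n m i (0 : ZMod n → ZMod m) = 0 := rfl
  rw [this, add_zero]

lemma rot_inv (j : ZMod n) : (rot n m j)⁻¹ = rot n m (-j) := by
  show (-(shift n m (-j) 0), -j) = ((0 : ZMod n → ZMod m), -j)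
  have : shift n m (-j) (0 : ZMod n → ZMod m) = 0 := rfl
  rw [this, neg_zero]

lemma prod_sgen (t : ℕ) (x : Fin t → ZMod m) :
    (List.ofFn fun i => sgen n m (x i)).prod
      = (∑ i : Fin t, single n m ((i : ℕ) : ZMod n) (x i), ((t : ℕ) : ZMod n)) := by
  induction t with
  | zero =>
      simp only [List.ofFn_zero, List.prod_nil, Nat.cast_zero, Finset.univ_eq_empty,
        Finset.sum_empty]
      rfl
  | succ t ih =>
      rw [List.ofFn_succ', List.concat_eq_append, List.prod_append, List.prod_cons,
        List.prod_nil, mul_one, ih]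
      refine (mul_def n m _ _).trans ?_
      simp only [sgen]
      refine Prod.ext_iff.2 ?_
      dsimp only
      refine ⟨?_, by push_cast; ring⟩
      rw [shift_single, zero_add, Fin.sum_univ_castSucc]
      simp [Fin.coe_castSucc, Fin.val_last]

lemma cast_bijective [NeZero n] : Function.Bijective (fun i : Fin n => ((i : ℕ) : ZMod n)) := by
  rw [Fintype.bijective_iff_injective_and_card]
  refine ⟨?_, by simp [ZMod.card]⟩
  intro i j h
  have h2 := congrArg ZMod.val h
  rwa [ZMod.val_natCast_of_lt i.isLt, ZMod.val_natCast_of_lt j.isLt, ← Fin.ext_iff] at h2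

lemma sum_single [NeZero n] (v : ZMod n → ZMod m) :
    (∑ i : Fin n, single n m ((i : ℕ) : ZMod n) (v (((i : ℕ) : ZMod n)))) = v := by
  rw [Fintype.sum_bijective _ (cast_bijective n) _
    (fun c : ZMod n => single n m c (v c)) (fun i => rfl)]
  funext j
  rw [Finset.sum_apply]
  simp only [single]
  rw [Finset.sum_ite_eq]
  simp

variable [NeZero n] [NeZero m]

instance : DecidableEq (Sd n m) := inferInstanceAs (DecidableEq (_ × _))
instance : Fintype (Sd n m) := inferInstanceAs (Fintype (_ × _))

/-- the generating set -/
def gens : Finset (Sd n m) :=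
  ((Finset.univ.erase 0).image fun x : ZMod m => sgen n m x) ∪
  ((Finset.univ.erase 0).image fun x : ZMod m => (sgen n m x)⁻¹) ∪
  ((Finset.univ.erase 0).image fun j : ZMod n => rot n m j)

lemma rot_mem {j : ZMod n} (hj : j ≠ 0) : rot n m j ∈ gens n m := by
  apply Finset.mem_union_right
  exact Finset.mem_image.2 ⟨j, Finset.mem_erase.2 ⟨hj, Finset.mem_univ _⟩, rfl⟩

lemma sgen_zero [Fact (1 < n)] : sgen n m 0 = rot n m 1 := by
  unfold sgen rot
  refine Prod.ext_iff.2 ?_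
  dsimp only
  refine ⟨?_, rfl⟩
  funext j; simp [single]

lemma sgen_mem [Fact (1 < n)] (x : ZMod m) : sgen n m x ∈ gens n m := by
  by_cases hx : x = 0
  · rw [hx, sgen_zero]
    exact rot_mem n m one_ne_zero
  · apply Finset.mem_union_left; apply Finset.mem_union_left
    exact Finset.mem_image.2 ⟨x, Finset.mem_erase.2 ⟨hx, Finset.mem_univ _⟩, rfl⟩

lemma card_gens : (gens n m).card ≤ (m - 1) + (m - 1) + (n - 1) := by
  have hA : ∀ (α : Type) [Fintype α] [DecidableEq α] (f : α → Sd n m),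
      ((Finset.univ.erase (0 : ZMod m)).image fun x : ZMod m => sgen n m x).card ≤ m - 1 := by
    intro _ _ _ _
    calc _ ≤ (Finset.univ.erase (0 : ZMod m)).card := Finset.card_image_le
    _ = m - 1 := by rw [Finset.card_erase_of_mem (Finset.mem_univ _)]; simp [ZMod.card]
  unfold gens
  refine le_trans (Finset.card_union_le _ _) ?_
  have h3 : ((Finset.univ.erase (0 : ZMod n)).image fun j : ZMod n => rot n m j).card ≤ n - 1 := by
    calc _ ≤ (Finset.univ.erase (0 : ZMod n)).card := Finset.card_image_le
    _ = n - 1 := by rw [Finset.card_erase_of_mem (Finset.mem_univ _)]; simp [ZMod.card]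
  refine add_le_add (le_trans (Finset.card_union_le _ _) (add_le_add ?_ ?_)) h3
  · calc _ ≤ (Finset.univ.erase (0 : ZMod m)).card := Finset.card_image_le
    _ = m - 1 := by rw [Finset.card_erase_of_mem (Finset.mem_univ _)]; simp [ZMod.card]
  · calc _ ≤ (Finset.univ.erase (0 : ZMod m)).card := Finset.card_image_le
    _ = m - 1 := by rw [Finset.card_erase_of_mem (Finset.mem_univ _)]; simp [ZMod.card]

lemma one_not_mem [Fact (1 < n)] : (1 : Sd n m) ∉ gens n m := by
  intro h
  have hone : ((1 : Sd n m).2) = 0 := rfl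
  rcases Finset.mem_union.1 h with h | h
  · rcases Finset.mem_union.1 h with h | h
    · obtain ⟨x, -, hx⟩ := Finset.mem_image.1 h
      have h2 : (1 : ZMod n) = 0 := congrArg Prod.snd hx
      exact one_ne_zero h2
    · obtain ⟨x, -, hx⟩ := Finset.mem_image.1 h
      have h2 : (-1 : ZMod n) = 0 := congrArg Prod.snd hx
      exact one_ne_zero (neg_eq_zero.1 h2)
  · obtain ⟨j, hj, hx⟩ := Finset.mem_image.1 h
    have h2 : j = 0 := congrArg Prod.snd hx
    exact (Finset.mem_erase.1 hj).1 h2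

lemma inv_mem [Fact (1 < n)] : ∀ s ∈ gens n m, s⁻¹ ∈ gens n m := by
  intro s hs
  rcases Finset.mem_union.1 hs with h | h
  · rcases Finset.mem_union.1 h with h | h
    · obtain ⟨x, hx, rfl⟩ := Finset.mem_image.1 h
      apply Finset.mem_union_left; apply Finset.mem_union_right
      exact Finset.mem_image.2 ⟨x, hx, rfl⟩
    · obtain ⟨x, hx, rfl⟩ := Finset.mem_image.1 h
      rw [inv_inv]
      apply Finset.mem_union_left; apply Finset.mem_union_left
      exact Finset.mem_image.2 ⟨x, hx, rfl⟩
  · obtain ⟨j, hj, rfl⟩ := Finset.mem_image.1 h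
    rw [rot_inv]
    exact rot_mem n m (neg_ne_zero.2 (Finset.mem_erase.1 hj).1)

lemma exists_word [Fact (1 < n)] (g : Sd n m) :
    ∃ l : List (Sd n m), (∀ x ∈ l, x ∈ gens n m) ∧ l.length ≤ n + 1 ∧ l.prod = g := by
  obtain ⟨v, j⟩ := g
  have hbase : (List.ofFn fun i : Fin n => sgen n m (v (((i : ℕ) : ZMod n)))).prod
      = ((v, 0) : Sd n m) := by
    rw [prod_sgen, sum_single, ZMod.natCast_self]
  by_cases hj : j = 0
  · subst hj
    refine ⟨_, ?_, ?_, hbase⟩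
    · intro x hx
      obtain ⟨i, rfl⟩ := List.mem_ofFn.1 hx
      exact sgen_mem n m _
    · simp
  · refine ⟨(List.ofFn fun i : Fin n => sgen n m (v (((i : ℕ) : ZMod n)))) ++ [rot n m j],
      ?_, ?_, ?_⟩
    · intro x hx
      rcases List.mem_append.1 hx with hx | hx
      · obtain ⟨i, rfl⟩ := List.mem_ofFn.1 hx
        exact sgen_mem n m _
      · rw [List.mem_singleton.1 hx]
        exact rot_mem n m hj
    · simp
    · rw [List.prod_append, List.prod_cons, List.prod_nil, mul_one, hbase]
      refine (mul_def n m _ _).trans ?_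
      have h1 : shift n m (0 : ZMod n) (0 : ZMod n → ZMod m) = 0 := rfl
      show (v + shift n m 0 (0 : ZMod n → ZMod m), (0 : ZMod n) + j) = (v, j)
      rw [h1, add_zero, zero_add]

lemma card_Sd : Nat.card (Sd n m) = m ^ n * n := by
  show Nat.card ((ZMod n → ZMod m) × ZMod n) = m ^ n * n
  rw [Nat.card_prod, Nat.card_fun]
  simp [Nat.card_zmod]

end Sd
end CayleyFirst

open CayleyFirst in
/-- Theorem 2 (first undirected construction): for any `k ≥ 4` and `d ≥ k+1` there is a
Cayley graph of diameter at most `k`, degree at most `d`, and order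
`(k-1)(⌊(d-k)/2⌋+2)^(k-1)`. -/
theorem cayley_graph_first_construction (k d : ℕ) (hk : 4 ≤ k) (hd : k + 1 ≤ d) :
    ∃ (G : Type) (_ : Group G) (_ : Fintype G) (S : Finset G),
      S.card ≤ d ∧
      (1 : G) ∉ S ∧
      (∀ s ∈ S, s⁻¹ ∈ S) ∧
      Nat.card G = (k - 1) * ((d - k) / 2 + 2) ^ (k - 1) ∧
      Subgroup.closure (S : Set G) = ⊤ ∧
      ∀ g : G, ∃ l : List G, (∀ x ∈ l, x ∈ S) ∧ l.length ≤ k ∧ l.prod = g := by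
  set n := k - 1 with hn
  set m := (d - k) / 2 + 2 with hm
  haveI : NeZero n := ⟨by omega⟩
  haveI : NeZero m := ⟨by omega⟩
  haveI : Fact (1 < n) := ⟨by omega⟩
  have hword : ∀ g : Sd n m, ∃ l : List (Sd n m),
      (∀ x ∈ l, x ∈ Sd.gens n m) ∧ l.length ≤ k ∧ l.prod = g := by
    intro g
    obtain ⟨l, h1, h2, h3⟩ := Sd.exists_word n m g
    exact ⟨l, h1, by omega, h3⟩
  refine ⟨Sd n m, inferInstance, inferInstance, Sd.gens n m, ?_, Sd.one_not_mem n m,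
    Sd.inv_mem n m, ?_, ?_, hword⟩
  · refine le_trans (Sd.card_gens n m) ?_
    have h2 : (d - k) / 2 * 2 ≤ d - k := Nat.div_mul_le_self _ _
    omega
  · rw [Sd.card_Sd, mul_comm]
  · rw [eq_top_iff]
    intro g _
    obtain ⟨l, h1, -, h3⟩ := hword g
    rw [← h3]
    exact Subgroup.list_prod_mem _ fun x hx => Subgroup.subset_closure (h1 x hx)
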